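/- Let f : S¹ → S¹ be a torsion map of order n with lift F satisfying Fⁿ(x) = x + m. Define H = (1/n) · Σ_{j=0}^{n−1} Fʲ. Then H is an increasing map satisfying H(x+1) = H(x)+1 and H ∘ F = R_{m/n} ∘ H, where R_{m/n}(x) = x + m/n. Consequently f is conjugate via the induced circle map h to the rotation by m/n. -/

import Mathlib

/-- For a torsion map `f` with lift `F` satisfying `Fⁿ(x) = x + m`, the map
`H = (1/n)·Σ_{j=0}^{n−1} Fʲ` is increasing, satisfies `H(x+1) = H(x)+1` and conjugates
`F` to the translation `R_{m/n}(x) = x + m/n`, i.e. `H ∘ F = R_{m/n} ∘ H`. -/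
theorem conjugation_of_torsion_map_to_rotation
    (F : ℝ → ℝ) (n : ℕ) (m : ℤ) (hn : 0 < n)
    (hmono : StrictMono F)
    (hcont : Continuous F)
    (hlift : ∀ x, F (x + 1) = F x + 1)
    (hFn : ∀ x, F^[n] x = x + m)
    (hFi : ∀ i, 0 < i → i < n → ¬ ∃ j : ℤ, ∀ x, F^[i] x = x + j)
    (H : ℝ → ℝ)
    (hH : H = fun x => (1 / (n : ℝ)) * ∑ j ∈ Finset.range n, F^[j] x) :
    StrictMono H ∧ (∀ x, H (x + 1) = H x + 1) ∧
      ∀ x, H (F x) = H x + (m : ℝ) / n := by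
  have hnR : (0 : ℝ) < n := by exact_mod_cast hn
  have hiter : ∀ j : ℕ, StrictMono (F^[j]) := fun j => hmono.iterate j
  have hliftj : ∀ (j : ℕ) (x : ℝ), F^[j] (x + 1) = F^[j] x + 1 := by
    intro j
    induction j with
    | zero => intro x; simp
    | succ k ih =>
      intro x
      rw [Function.iterate_succ_apply, hlift, ih, Function.iterate_succ_apply]
  subst hH
  refine ⟨?_, ?_, ?_⟩
  · intro x y hxy
    have hsum : ∑ j ∈ Finset.range n, F^[j] x < ∑ j ∈ Finset.range n, F^[j] y := by
      apply Finset.sum_lt_sum_of_nonempty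
      · exact ⟨0, Finset.mem_range.mpr hn⟩
      · intro j _; exact hiter j hxy
    simpa using (mul_lt_mul_of_pos_left hsum (by positivity : (0:ℝ) < 1 / n))
  · intro x
    simp only
    rw [show (∑ j ∈ Finset.range n, F^[j] (x + 1)) = (∑ j ∈ Finset.range n, F^[j] x) + n by
      simp [hliftj, Finset.sum_add_distrib]]
    field_simp
  · intro x
    simp only
    have key : ∑ j ∈ Finset.range n, F^[j] (F x)
        = (∑ j ∈ Finset.range n, F^[j] x) + m := by
      have h1 : ∀ j, F^[j] (F x) = F^[j + 1] x := by
        intro j; rw [Function.iterate_succ_apply]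
      calc ∑ j ∈ Finset.range n, F^[j] (F x)
          = ∑ j ∈ Finset.range n, F^[j + 1] x := by
            exact Finset.sum_congr rfl fun j _ => h1 j
        _ = (∑ j ∈ Finset.range (n + 1), F^[j] x) - F^[0] x := by
            rw [Finset.sum_range_succ' (fun j => F^[j] x) n]; ring_nf
        _ = (∑ j ∈ Finset.range n, F^[j] x) + m := by
            rw [Finset.sum_range_succ, hFn]; simp; ring
    rw [key]
    field_simp
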